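/- For every real λ ≠ 0 one has the identity X_b(λ)·X_b(−λ)·A(λ) + Y_b(λ)·Y_b(−λ)·B(λ) = −(1/(ħ²λ))·(1 − sinh(ħλ)/sinh(λ/(2η′))). (This is the coefficient identity underlying the commutator [b(λ), b(μ)] = −(1/(ħ²λ))(1 − sinh(ħλ)/sinh(λ/(2η′)))·δ(λ+μ) for b(λ) = X_b(λ)α(λ) + Y_b(λ)β(λ).) -/

import Mathlib

private lemma aux_stmt6 (h l d u v c : ℝ) (hh : h ≠ 0) (hl : l ≠ 0) (hd : d ≠ 0)
    (hdef : d = 4 * c + (u - v) + 2) :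
    (1 / (h * l) * (v - 2 * c - 1)) * (1 / (h * -l) * (v - 2 * c - 1)) * (l / d)
      + (1 / (h * l)) * (1 / (h * -l)) * (l * ((1 + u) * (1 - v) - 4 * c ^ 2) / d)
    = -(1 / (h ^ 2 * l)) * (1 - v) := by
  field_simp
  subst hdef
  ring

/-- for every real λ ≠ 0,
`X_b(λ)·X_b(−λ)·A(λ) + Y_b(λ)·Y_b(−λ)·B(λ) = −(1/(ħ²λ))·(1 − sinh(ħλ)/sinh(λ/(2η′)))`. -/
theorem stmt_6 (ℏ η η' : ℝ) (hℏ : 0 < ℏ) (hη : 0 < η) (hη' : 0 < η')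
    (hrel : 1 / η' = 1 / η + ℏ)
    (D A B Xa Xb Ya Yb : ℝ → ℝ)
    (hD : ∀ l : ℝ, D l =
      4 * Real.cosh (ℏ * l / 2) +
        ((Real.sinh (l / (2 * η)))⁻¹ - (Real.sinh (l / (2 * η')))⁻¹) * Real.sinh (ℏ * l) + 2)
    (hA : ∀ l : ℝ, A l = l / D l)
    (hB : ∀ l : ℝ, B l =
      l * ((1 + (Real.sinh (l / (2 * η)))⁻¹ * Real.sinh (ℏ * l)) *
            (1 - (Real.sinh (l / (2 * η')))⁻¹ * Real.sinh (ℏ * l)) -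
            4 * (Real.cosh (ℏ * l / 2)) ^ 2) / D l)
    (hXa : ∀ l : ℝ, Xa l =
      (1 / (ℏ * l)) * ((Real.sinh (l / (2 * η)))⁻¹ * Real.sinh (ℏ * l) + 2 * Real.cosh (ℏ * l / 2) + 1))
    (hXb : ∀ l : ℝ, Xb l =
      (1 / (ℏ * l)) * ((Real.sinh (l / (2 * η')))⁻¹ * Real.sinh (ℏ * l) - 2 * Real.cosh (ℏ * l / 2) - 1))
    (hYa : ∀ l : ℝ, Ya l = 1 / (ℏ * l))
    (hYb : ∀ l : ℝ, Yb l = 1 / (ℏ * l)) :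
    ∀ l : ℝ, l ≠ 0 →
      Xb l * Xb (-l) * A l + Yb l * Yb (-l) * B l =
        -(1 / (ℏ ^ 2 * l)) * (1 - Real.sinh (ℏ * l) / Real.sinh (l / (2 * η'))) := by
  intro l hl
  have hηne : η ≠ 0 := ne_of_gt hη
  have hη'ne : η' ≠ 0 := ne_of_gt hη'
  have hℏne : ℏ ≠ 0 := ne_of_gt hℏ
  have hsum : l / (2 * η') = l / (2 * η) + ℏ * l / 2 := by
    linear_combination (l / 2) * hrel
  have hs : Real.sinh (l / (2 * η)) ≠ 0 := by
    rw [Real.sinh_ne_zero]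
    intro h
    exact hl (by field_simp at h; simpa using h)
  have hs' : Real.sinh (l / (2 * η')) ≠ 0 := by
    rw [Real.sinh_ne_zero]
    intro h
    exact hl (by field_simp at h; simpa using h)
  have hkey : (Real.sinh (l / (2 * η)))⁻¹ - (Real.sinh (l / (2 * η')))⁻¹ =
      (Real.sinh (l / (2 * η')) - Real.sinh (l / (2 * η))) /
        (Real.sinh (l / (2 * η)) * Real.sinh (l / (2 * η'))) := by
    field_simp
  have hmid : 0 ≤ ((Real.sinh (l / (2 * η)))⁻¹ - (Real.sinh (l / (2 * η')))⁻¹) * Real.sinh (ℏ * l) := by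
    rw [hkey]
    rcases lt_or_gt_of_ne hl with hneg | hpos
    · have ha' : l / (2 * η') < l / (2 * η) := by rw [hsum]; nlinarith
      have ha0 : l / (2 * η) < 0 := div_neg_of_neg_of_pos hneg (by positivity)
      have h1 : Real.sinh (l / (2 * η')) < Real.sinh (l / (2 * η)) := Real.sinh_lt_sinh.2 ha'
      have h2 : Real.sinh (l / (2 * η)) < 0 := by simpa using Real.sinh_lt_sinh.2 ha0
      have h3 : Real.sinh (ℏ * l) < 0 := by
        have : ℏ * l < 0 := mul_neg_of_pos_of_neg hℏ hneg
        simpa using Real.sinh_lt_sinh.2 this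
      have hden : 0 < Real.sinh (l / (2 * η)) * Real.sinh (l / (2 * η')) :=
        mul_pos_of_neg_of_neg h2 (h1.trans h2)
      have : (Real.sinh (l / (2 * η')) - Real.sinh (l / (2 * η))) /
          (Real.sinh (l / (2 * η)) * Real.sinh (l / (2 * η'))) < 0 :=
        div_neg_of_neg_of_pos (by linarith) hden
      nlinarith
    · have ha' : l / (2 * η) < l / (2 * η') := by rw [hsum]; nlinarith
      have ha0 : 0 < l / (2 * η) := by positivity
      have h1 : Real.sinh (l / (2 * η)) < Real.sinh (l / (2 * η')) := Real.sinh_lt_sinh.2 ha'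
      have h2 : 0 < Real.sinh (l / (2 * η)) := by simpa using Real.sinh_lt_sinh.2 ha0
      have h3 : 0 < Real.sinh (ℏ * l) := by
        have : 0 < ℏ * l := mul_pos hℏ hpos
        simpa using Real.sinh_lt_sinh.2 this
      have hden : 0 < Real.sinh (l / (2 * η)) * Real.sinh (l / (2 * η')) :=
        mul_pos h2 (h2.trans h1)
      have : 0 < (Real.sinh (l / (2 * η')) - Real.sinh (l / (2 * η))) /
          (Real.sinh (l / (2 * η)) * Real.sinh (l / (2 * η'))) :=
        div_pos (by linarith) hden
      nlinarith
  have hDpos : 0 < D l := by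
    rw [hD]
    have hc : 1 ≤ Real.cosh (ℏ * l / 2) := Real.one_le_cosh _
    linarith
  have hDne : D l ≠ 0 := ne_of_gt hDpos
  rw [hA l, hB l, hXb l, hXb (-l), hYb l, hYb (-l)]
  simp only [mul_neg, neg_div, Real.sinh_neg, Real.cosh_neg, inv_neg]
  have key := aux_stmt6 ℏ l (D l)
      ((Real.sinh (l / (2 * η)))⁻¹ * Real.sinh (ℏ * l))
      ((Real.sinh (l / (2 * η')))⁻¹ * Real.sinh (ℏ * l))
      (Real.cosh (ℏ * l / 2)) hℏne hl hDne (by rw [hD l]; ring)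
  have hv : Real.sinh (ℏ * l) / Real.sinh (l / (2 * η')) =
      (Real.sinh (l / (2 * η')))⁻¹ * Real.sinh (ℏ * l) := by
    rw [div_eq_inv_mul]
  rw [hv]
  linear_combination key
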